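/- In the ring of formal power series ℚ[[t]], let f = (1+3t)^g · ((1+2t)^{-1})^2, where (1+2t)^{-1} denotes the (well-defined) inverse of the invertible power series 1+2t. Then for every natural number g the coefficient of t^1 in f equals 3g - 4, and for every g ≥ 2 the coefficient of t^{g-2} in f equals (3^g - 2g - 1)/4. -/

import Mathlib

open PowerSeries Finset

lemma two_eq_C : (2 : ℚ⟦X⟧) = PowerSeries.C (R := ℚ) 2 := (map_ofNat (PowerSeries.C (R := ℚ)) 2).symm
lemma three_eq_C : (3 : ℚ⟦X⟧) = PowerSeries.C (R := ℚ) 3 := (map_ofNat (PowerSeries.C (R := ℚ)) 3).symm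

lemma inv_one_add_two_X : ((1 + 2 * X)⁻¹ : ℚ⟦X⟧) = PowerSeries.mk fun n => (-2)^n := by
  rw [eq_comm, PowerSeries.eq_inv_iff_mul_eq_one (by simp)]
  ext n
  rw [mul_add, mul_one, ← mul_assoc, mul_comm (PowerSeries.mk fun n => ((-2:ℚ))^n) 2, mul_assoc]
  cases n with
  | zero => simp
  | succ n =>
    simp [two_eq_C, PowerSeries.coeff_succ_mul_X, PowerSeries.coeff_C_mul, pow_succ]
    ring

lemma inv_sq : (((1 + 2 * X)⁻¹ : ℚ⟦X⟧))^2 = PowerSeries.mk fun n => ((n:ℚ)+1) * (-2)^n := by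
  rw [inv_one_add_two_X, sq]
  ext n
  rw [PowerSeries.coeff_mul, Finset.Nat.sum_antidiagonal_eq_sum_range_succ_mk]
  simp only [PowerSeries.coeff_mk]
  have : ∀ k ∈ Finset.range (n+1), (-2:ℚ)^k * (-2)^(n-k) = (-2)^n := by
    intro k hk
    rw [← pow_add, Nat.add_sub_cancel' (Nat.lt_succ_iff.mp (Finset.mem_range.mp hk))]
  rw [Finset.sum_congr rfl this, Finset.sum_const, Finset.card_range, nsmul_eq_mul]
  push_cast; ring

lemma coeff_one_add_three_X_pow (g k : ℕ) :
    PowerSeries.coeff (R := ℚ) k ((1 + 3 * X)^g) = (g.choose k) * 3^k := by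
  rw [add_comm, add_pow, map_sum]
  have h1 : ∀ i ∈ Finset.range (g+1),
      PowerSeries.coeff (R := ℚ) k ((3*X)^i * 1^(g-i) * (g.choose i : ℚ⟦X⟧))
        = if i = k then (g.choose k : ℚ) * 3^k else 0 := by
    intro i _
    rw [one_pow, mul_one, mul_pow, three_eq_C, ← map_pow, mul_comm,
      ← PowerSeries.smul_eq_C_mul, show ((g.choose i : ℚ⟦X⟧)) = PowerSeries.C (R := ℚ) (g.choose i) from (map_natCast (PowerSeries.C (R := ℚ)) _).symm,
      PowerSeries.coeff_C_mul, map_smul, smul_eq_mul, PowerSeries.coeff_X_pow]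
    rcases eq_or_ne i k with h | h
    · subst h; simp
    · simp [h, Ne.symm h]
  rw [Finset.sum_congr rfl h1, Finset.sum_ite_eq' (Finset.range (g+1)) k]
  by_cases hk : k ∈ Finset.range (g+1)
  · simp [hk]
  · simp only [hk, if_false]
    rw [Nat.choose_eq_zero_of_lt (by simpa [Finset.mem_range, Nat.lt_succ_iff, not_le] using hk)]
    simp

lemma coeff_f (g n : ℕ) :
    PowerSeries.coeff (R := ℚ) n ((1 + 3 * X)^g * ((1 + 2 * X)⁻¹)^2)
      = ∑ k ∈ Finset.range (n+1),
          (g.choose k : ℚ) * 3^k * (((n-k : ℕ) : ℚ) + 1) * (-2)^(n-k) := by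
  rw [inv_sq, PowerSeries.coeff_mul, Finset.Nat.sum_antidiagonal_eq_sum_range_succ_mk]
  refine Finset.sum_congr rfl fun k hk => ?_
  rw [coeff_one_add_three_X_pow, PowerSeries.coeff_mk]
  ring

lemma sumA (n : ℕ) (x : ℚ) :
    ∑ k ∈ Finset.range (n+1), (n.choose k : ℚ) * x^k = (x+1)^n := by
  rw [add_pow]
  refine Finset.sum_congr rfl fun k _ => ?_
  rw [one_pow]; ring

lemma sumB (n : ℕ) (x : ℚ) :
    ∑ k ∈ Finset.range (n+2), (k : ℚ) * ((n+1).choose k : ℚ) * x^k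
      = (n+1) * x * (x+1)^n := by
  rw [Finset.sum_range_succ']
  simp only [Nat.cast_zero, zero_mul, pow_zero, add_zero]
  have h1 : ∀ j ∈ Finset.range (n+1),
      ((j:ℚ)+1) * ((n+1).choose (j+1) : ℚ) * x^(j+1)
        = ((n:ℚ)+1) * x * ((n.choose j : ℚ) * x^j) := by
    intro j _
    have : (n+1) * n.choose j = (n+1).choose (j+1) * (j+1) := Nat.add_one_mul_choose_eq n j
    have h2 : ((n:ℚ)+1) * (n.choose j : ℚ) = ((n+1).choose (j+1) : ℚ) * ((j:ℚ)+1) := by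
      exact_mod_cast congrArg (Nat.cast : ℕ → ℚ) this
    rw [pow_succ]
    linear_combination (-(x ^ j * x)) * h2
  push_cast
  calc ∑ j ∈ Finset.range (n+1), ((j:ℚ)+1) * ((n+1).choose (j+1) : ℚ) * x^(j+1)
      = ∑ j ∈ Finset.range (n+1), ((n:ℚ)+1) * x * ((n.choose j : ℚ) * x^j) :=
        Finset.sum_congr rfl h1
    _ = ((n:ℚ)+1) * x * (x+1)^n := by rw [← Finset.mul_sum, sumA]

theorem chern_class_power_series_coeffs (g : ℕ) :
    (PowerSeries.coeff (R := ℚ) 1)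
        ((1 + 3 * PowerSeries.X) ^ g * ((1 + 2 * PowerSeries.X)⁻¹) ^ 2)
      = 3 * (g : ℚ) - 4 ∧
    (2 ≤ g →
      (PowerSeries.coeff (R := ℚ) (g - 2))
          ((1 + 3 * PowerSeries.X) ^ g * ((1 + 2 * PowerSeries.X)⁻¹) ^ 2)
        = ((3 : ℚ) ^ g - 2 * g - 1) / 4) := by
  constructor
  · rw [coeff_f]
    simp [Finset.sum_range_succ]
    ring
  · intro hg
    obtain ⟨m, rfl⟩ : ∃ m, g = m + 2 := ⟨g - 2, by omega⟩
    rw [coeff_f]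
    simp only [Nat.add_sub_cancel]
    have step1 : ∀ k ∈ Finset.range (m+1),
        ((m+2).choose k : ℚ) * 3^k * (((m-k : ℕ) : ℚ) + 1) * (-2)^(m-k)
          = (-2)^m * (((m+2).choose k : ℚ) * ((m:ℚ) + 1 - k) * (-3/2)^k) := by
      intro k hk
      have hk' : k ≤ m := Nat.lt_succ_iff.mp (Finset.mem_range.mp hk)
      have hc : ((m-k : ℕ) : ℚ) = (m:ℚ) - k := by
        rw [Nat.cast_sub hk']
      have hp : ((-2:ℚ))^m = (-2)^(m-k) * (-2)^k := by
        rw [← pow_add, Nat.sub_add_cancel hk']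
      have hq : ((-2:ℚ))^k * (-3/2)^k = 3^k := by
        rw [← mul_pow]; norm_num
      rw [hc, hp]
      calc ((m+2).choose k : ℚ) * 3^k * ((m:ℚ) - k + 1) * (-2)^(m-k)
          = (-2)^(m-k) * (((m+2).choose k : ℚ) * ((m:ℚ) + 1 - k) * 3^k) := by ring
        _ = (-2)^(m-k) * (-2)^k * (((m+2).choose k : ℚ) * ((m:ℚ) + 1 - k) * (-3/2)^k) := by
            rw [← hq]; ring
    rw [Finset.sum_congr rfl step1, ← Finset.mul_sum]
    set x : ℚ := -3/2 with hx
    have hU : ∑ k ∈ Finset.range (m+3), ((m+2).choose k : ℚ) * ((m:ℚ) + 1 - k) * x^k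
        = ((m:ℚ)+1) * (x+1)^(m+2) - ((m:ℚ)+2) * x * (x+1)^(m+1) := by
      have : ∀ k ∈ Finset.range (m+3),
          ((m+2).choose k : ℚ) * ((m:ℚ) + 1 - k) * x^k
            = ((m:ℚ)+1) * (((m+2).choose k : ℚ) * x^k)
              - (k:ℚ) * ((m+2).choose k : ℚ) * x^k := by
        intro k _; ring
      rw [Finset.sum_congr rfl this, Finset.sum_sub_distrib, ← Finset.mul_sum]
      have hA := sumA (m+2) x
      have hB := sumB (m+1) x
      push_cast at hB ⊢
      rw [show m+3 = (m+2)+1 by ring] at *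
      rw [hA]
      rw [show ((m:ℚ)+1+1) = (m:ℚ)+2 by ring] at hB
      rw [show (m+1)+2 = (m+2)+1 by ring] at hB
      rw [hB]
    have hT : ∑ k ∈ Finset.range (m+1), ((m+2).choose k : ℚ) * ((m:ℚ) + 1 - k) * x^k
        = ((m:ℚ)+1) * (x+1)^(m+2) - ((m:ℚ)+2) * x * (x+1)^(m+1) + x^(m+2) := by
      have e1 : Finset.range (m+3) = Finset.range ((m+2)+1) := rfl
      rw [e1, Finset.sum_range_succ, Finset.sum_range_succ] at hU
      have z1 : ((m+2).choose (m+1) : ℚ) * ((m:ℚ) + 1 - (m+1 : ℕ)) * x^(m+1) = 0 := by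
        push_cast; ring
      have z2 : ((m+2).choose (m+2) : ℚ) * ((m:ℚ) + 1 - (m+2 : ℕ)) * x^(m+2) = -x^(m+2) := by
        rw [Nat.choose_self]; push_cast; ring
      rw [z1, z2] at hU
      linarith [hU]
    rw [hT]
    have ha : ((-2:ℚ))^m * (-1/2)^m = 1 := by rw [← mul_pow]; norm_num
    have hb : ((-2:ℚ))^m * x^m = 3^m := by rw [hx, ← mul_pow]; norm_num
    have hx1 : x + 1 = -1/2 := by rw [hx]; norm_num
    rw [hx1, hx]
    push_cast
    rw [pow_succ, pow_succ, pow_succ, pow_succ, pow_succ, pow_succ]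
    linear_combination (((m:ℚ)+1)/4 - (3/4)*((m:ℚ)+2)) * ha + (9/4) * hb
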